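/- arXiv:math/0009123 — 3 statements merged into one kernel-verified Lean document; each statement's English description precedes it below -/
import Mathlib

section
/- Let F be a field, G a group, and V a finite-dimensional F-vector space equipped with a linear representation of G with dim_F(V) > 1. If the G-module V is very simple, then V is not isomorphic to a tensor product of two G-modules of strictly smaller dimension; that is, there do not exist finite-dimensional G-modules V₁ and V₂ over F with dim_F(V₁) < dim_F(V) and dim_F(V₂) < dim_F(V) such that V is isomorphic as a G-module to V₁ ⊗_F V₂ (with G acting diagonally on the tensor product). -/
open TensorProduct

/-- A `G`-module `V` over a field `F` is *very simple* if every `F`-subalgebra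
`R ⊆ End_F(V)` (containing the identity) with `ρ(σ) R ρ(σ)⁻¹ ⊆ R` for all `σ ∈ G`
satisfies `R = F·Id` or `R = End_F(V)`. -/
def VerySimple (F : Type) [Field F] {G V : Type} [Group G] [AddCommGroup V] [Module F V]
    (ρ : Representation F G V) : Prop :=
  ∀ R : Subalgebra F (Module.End F V),
    (∀ σ : G, ∀ r ∈ R, ρ σ * r * ρ σ⁻¹ ∈ R) → R = ⊥ ∨ R = ⊤

/-- Over a field, a tensor with a nonzero right factor vanishes only if the left factor does. -/
theorem left_eq_zero_of_tmul_eq_zero (F : Type) [Field F] {V₁ V₂ : Type} [AddCommGroup V₁]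
    [AddCommGroup V₂] [Module F V₁] [Module F V₂] {u : V₁} {y : V₂} (hy : y ≠ 0)
    (h : u ⊗ₜ[F] y = (0 : V₁ ⊗[F] V₂)) : u = 0 := by
  have hφ : ¬ ∀ φ : Module.Dual F V₂, φ y = 0 := by
    rw [Module.forall_dual_apply_eq_zero_iff]; exact hy
  push_neg at hφ
  obtain ⟨φ, hφ⟩ := hφ
  have := congrArg (fun w => (TensorProduct.rid F V₁) (TensorProduct.map LinearMap.id φ w)) h
  simp only [TensorProduct.map_tmul, LinearMap.id_coe, id_eq, TensorProduct.rid_tmul,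
    map_zero] at this
  rcases smul_eq_zero.mp this with h' | h'
  · exact absurd h' hφ
  · exact h'

/-- a very simple module `V` with `dim_F V > 1` is not isomorphic (as a
`G`-module) to a tensor product of two `G`-modules of strictly smaller dimension. -/
theorem verySimple_not_tensor_decomposable
    (F : Type) [Field F] (G : Type) [Group G] (V : Type) [AddCommGroup V] [Module F V]
    [FiniteDimensional F V] (ρ : Representation F G V)
    (hdim : 1 < Module.finrank F V) (h : VerySimple F ρ) :
    ∀ (V₁ V₂ : Type) [AddCommGroup V₁] [AddCommGroup V₂] [Module F V₁] [Module F V₂]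
      [FiniteDimensional F V₁] [FiniteDimensional F V₂]
      (ρ₁ : Representation F G V₁) (ρ₂ : Representation F G V₂),
      Module.finrank F V₁ < Module.finrank F V →
      Module.finrank F V₂ < Module.finrank F V →
      ∀ e : V ≃ₗ[F] (V₁ ⊗[F] V₂),
        ¬ (∀ (g : G) (v : V), e (ρ g v) = (ρ₁.tprod ρ₂) g (e v)) := by
  intro V₁ V₂ _ _ _ _ _ _ ρ₁ ρ₂ h₁ h₂ e hcomm
  -- dimensions
  have hmul : Module.finrank F V = Module.finrank F V₁ * Module.finrank F V₂ := by
    rw [e.finrank_eq, Module.finrank_tensorProduct]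
  have hd₁pos : 0 < Module.finrank F V₁ := by
    rcases Nat.eq_zero_or_pos (Module.finrank F V₁) with h0 | h0
    · rw [h0, zero_mul] at hmul; omega
    · exact h0
  have hd₂pos : 0 < Module.finrank F V₂ := by
    rcases Nat.eq_zero_or_pos (Module.finrank F V₂) with h0 | h0
    · rw [h0, mul_zero] at hmul; omega
    · exact h0
  have hd₁2 : 1 < Module.finrank F V₁ := by
    by_contra hc
    push_neg at hc
    have := Nat.mul_le_mul_right (Module.finrank F V₂) hc
    omega
  have hd₂2 : 1 < Module.finrank F V₂ := by
    by_contra hc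
    push_neg at hc
    have := Nat.mul_le_mul_left (Module.finrank F V₁) hc
    omega
  -- the algebra homomorphism  End V₁ → End V,  f ↦ e⁻¹ ∘ (f ⊗ id) ∘ e
  let Φ : Module.End F V₁ →ₐ[F] Module.End F V :=
    ((e.symm.conjAlgEquiv F).toAlgHom.comp
      ((Module.endTensorEndAlgHom (R := F) (S := F) (A := F) (M := V₁) (N := V₂)).comp
        Algebra.TensorProduct.includeLeft))
  have hΦ : ∀ (f : Module.End F V₁) (v : V),
      Φ f v = e.symm (TensorProduct.map f LinearMap.id (e v)) := fun f v => rfl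
  -- the commutation relation, rephrased
  have hcomm' : ∀ (g : G) (w : V₁ ⊗[F] V₂),
      ρ g (e.symm w) = e.symm ((ρ₁.tprod ρ₂) g w) := by
    intro g w
    apply e.injective
    rw [hcomm g (e.symm w)]
    simp
  -- conjugation stability of the range of Φ
  set R : Subalgebra F (Module.End F V) := Φ.range with hR
  have hstab : ∀ σ : G, ∀ r ∈ R, ρ σ * r * ρ σ⁻¹ ∈ R := by
    rintro σ r ⟨f, rfl⟩
    refine ⟨ρ₁ σ * f * ρ₁ σ⁻¹, ?_⟩
    have key : ((ρ₁.tprod ρ₂) σ) ∘ₗ (TensorProduct.map f LinearMap.id)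
        ∘ₗ ((ρ₁.tprod ρ₂) σ⁻¹)
        = TensorProduct.map (ρ₁ σ * f * ρ₁ σ⁻¹) LinearMap.id := by
      apply TensorProduct.ext'
      intro x y
      have h2 : (ρ₂ σ) ((ρ₂ σ⁻¹) y) = y := by
        rw [← Module.End.mul_apply, ← map_mul, mul_inv_cancel, map_one, Module.End.one_apply]
      simp [Representation.tprod_apply, Module.End.mul_apply, h2]
    apply LinearMap.ext
    intro v
    have hv : e ((ρ σ⁻¹) v) = (ρ₁.tprod ρ₂) σ⁻¹ (e v) := hcomm σ⁻¹ v
    calc Φ (ρ₁ σ * f * ρ₁ σ⁻¹) v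
        = e.symm (TensorProduct.map (ρ₁ σ * f * ρ₁ σ⁻¹) LinearMap.id (e v)) := hΦ _ v
      _ = e.symm ((ρ₁.tprod ρ₂) σ (TensorProduct.map f LinearMap.id
            ((ρ₁.tprod ρ₂) σ⁻¹ (e v)))) := by rw [← key]; rfl
      _ = ρ σ (e.symm (TensorProduct.map f LinearMap.id ((ρ₁.tprod ρ₂) σ⁻¹ (e v)))) := by
            rw [hcomm']
      _ = ρ σ (Φ f ((ρ σ⁻¹) v)) := by rw [hΦ f ((ρ σ⁻¹) v), hv]
      _ = (ρ σ * Φ f * ρ σ⁻¹) v := by simp [Module.End.mul_apply]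
  -- apply very simplicity
  rcases h R hstab with hbot | htop
  · -- R = ⊥ : every endomorphism of V₁ is scalar, contradicting 1 < d₁
    have hy : ∃ y : V₂, y ≠ 0 := by
      have : Nontrivial V₂ := Module.nontrivial_of_finrank_pos hd₂pos
      exact exists_ne 0
    obtain ⟨y, hy⟩ := hy
    have hscal : ∀ f : Module.End F V₁, ∃ c : F, ∀ x : V₁, f x = c • x := by
      intro f
      have hmem : Φ f ∈ R := ⟨f, rfl⟩
      rw [hbot, Algebra.mem_bot] at hmem
      obtain ⟨c, hc⟩ := hmem
      refine ⟨c, fun x => ?_⟩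
      have hfx : Φ f (e.symm (x ⊗ₜ[F] y)) = c • (e.symm (x ⊗ₜ[F] y)) := by
        rw [← hc]
        simp [Algebra.algebraMap_eq_smul_one, LinearMap.smul_apply, Module.End.one_apply]
      rw [hΦ] at hfx
      simp only [LinearEquiv.apply_symm_apply, TensorProduct.map_tmul, LinearMap.id_coe,
        id_eq] at hfx
      have : (f x) ⊗ₜ[F] y = (c • x) ⊗ₜ[F] y := by
        apply e.symm.injective.eq_iff.mp
        rw [hfx, ← map_smul, TensorProduct.smul_tmul']
      have hz : (f x - c • x) ⊗ₜ[F] y = 0 := by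
        rw [TensorProduct.sub_tmul, this, sub_self]
      have := left_eq_zero_of_tmul_eq_zero F hy hz
      rw [sub_eq_zero] at this
      exact this
    -- build a non-scalar endomorphism of V₁
    have b := Module.finBasis F V₁
    let i0 : Fin (Module.finrank F V₁) := ⟨0, by omega⟩
    let i1 : Fin (Module.finrank F V₁) := ⟨1, by omega⟩
    have hb0 : i0 ≠ i1 := Fin.ne_of_val_ne (by simp [i0, i1])
    let f : Module.End F V₁ :=
      (LinearMap.toSpanSingleton F V₁ (b i0)).comp (b.coord i0)
    obtain ⟨c, hc⟩ := hscal f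
    have hf0 : f (b i0) = b i0 := by
      simp [f, LinearMap.toSpanSingleton_apply]
    have hf1 : f (b i1) = 0 := by
      simp [f, LinearMap.toSpanSingleton_apply, Module.Basis.coord_apply, Module.Basis.repr_self,
        Finsupp.single_eq_of_ne' (Ne.symm hb0)]
    have hc0 : c = 0 := by
      have := hc (b i1)
      rw [hf1] at this
      rcases smul_eq_zero.mp this.symm with h' | h'
      · exact h'
      · exact absurd h' (b.ne_zero i1)
    have := hc (b i0)
    rw [hf0, hc0, zero_smul] at this
    exact absurd this (b.ne_zero i0)
  · -- R = ⊤ : Φ is surjective, contradicting d₁ < n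
    have hsurj : Function.Surjective (Φ.toLinearMap) := by
      intro x
      have : x ∈ R := htop ▸ Algebra.mem_top
      obtain ⟨f, hf⟩ := this
      exact ⟨f, hf⟩
    have hr : LinearMap.range Φ.toLinearMap = ⊤ := LinearMap.range_eq_top.mpr hsurj
    have hle := Φ.toLinearMap.finrank_range_le
    rw [hr, finrank_top] at hle
    rw [Module.finrank_linearMap, Module.finrank_linearMap] at hle
    have : Module.finrank F V₁ * Module.finrank F V₁
        < Module.finrank F V * Module.finrank F V := Nat.mul_lt_mul_of_lt_of_lt h₁ h₁
    omega
end

section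
/- Let g be a positive integer and let Z be a subgroup of the symplectic group Sp_{2g}(ℚ₂) (the group of invertible 2g × 2g matrices over the 2-adic numbers ℚ₂ preserving the standard nondegenerate alternating bilinear form) such that every element of Z has order dividing 2. Then Z is a finite elementary abelian 2-group of order at most 2^g. -/
open Matrix Module

private lemma sq_one_subgroup_comm {G : Type*} [Group G] (S : Subgroup G)
    (h : ∀ s ∈ S, s * s = 1) : ∀ a ∈ S, ∀ b ∈ S, a * b = b * a := by
  have hinv : ∀ a ∈ S, a⁻¹ = a := fun a ha => inv_eq_of_mul_eq_one_right (h a ha)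
  intro a ha b hb
  calc a * b = (a * b)⁻¹ := (inv_eq_of_mul_eq_one_right (h _ (S.mul_mem ha hb))).symm
    _ = b⁻¹ * a⁻¹ := mul_inv_rev a b
    _ = b * a := by rw [hinv a ha, hinv b hb]

private noncomputable def restrictHom (V : Type) [AddCommGroup V] [Module ℚ_[2] V]
    (S : Subgroup (V ≃ₗ[ℚ_[2]] V)) (W : Submodule ℚ_[2] V)
    (hW : ∀ t : ↥S, W.map ((t : V ≃ₗ[ℚ_[2]] V) : V →ₗ[ℚ_[2]] V) = W) :
    ↥S →* (↥W ≃ₗ[ℚ_[2]] ↥W) :=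
  MonoidHom.mk' (fun t => ((t : V ≃ₗ[ℚ_[2]] V).submoduleMap W).trans
      (LinearEquiv.ofEq _ _ (hW t)))
    (by intro t t'; ext x; rfl)

private lemma restrictHom_apply (V : Type) [AddCommGroup V] [Module ℚ_[2] V]
    (S : Subgroup (V ≃ₗ[ℚ_[2]] V)) (W : Submodule ℚ_[2] V)
    (hW : ∀ t : ↥S, W.map ((t : V ≃ₗ[ℚ_[2]] V) : V →ₗ[ℚ_[2]] V) = W)
    (t : ↥S) (x : ↥W) : ((restrictHom V S W hW t) x : V) = (t : V ≃ₗ[ℚ_[2]] V) x := rfl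

private theorem key (n : ℕ) :
    ∀ (V : Type) [AddCommGroup V] [Module ℚ_[2] V] [FiniteDimensional ℚ_[2] V],
      Module.finrank ℚ_[2] V = n →
      ∀ B : LinearMap.BilinForm ℚ_[2] V, B.IsAlt → B.Nondegenerate →
      ∀ S : Subgroup (V ≃ₗ[ℚ_[2]] V),
        (∀ s ∈ S, s * s = 1) →
        (∀ s ∈ S, ∀ v w, B (s v) (s w) = B v w) →
        Finite S ∧ Nat.card S ≤ 2 ^ (n / 2) := by
  induction n using Nat.strong_induction_on with
  | _ n IH =>
  intro V _ _ _ hrank B halt hnd S hS2 hSB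
  classical
  have two_ne : (2 : ℚ_[2]) ≠ 0 := two_ne_zero
  by_cases hn0 : n = 0
  · subst hn0
    have hsub : Subsingleton V := Module.finrank_zero_iff.mp hrank
    have hS : Subsingleton ↥S := ⟨fun a b => Subtype.ext (LinearEquiv.ext fun x =>
      Subsingleton.elim _ _)⟩
    haveI : Unique ↥S := ⟨⟨1⟩, fun a => Subsingleton.elim a _⟩
    refine ⟨Finite.of_subsingleton, ?_⟩
    simp [Nat.card_unique]
  by_cases hn1 : n = 1
  · exfalso
    subst hn1
    obtain ⟨v, hv⟩ := Module.finrank_pos_iff_exists_ne_zero.mp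
      (by rw [hrank]; norm_num : 0 < Module.finrank ℚ_[2] V)
    apply hv
    apply hnd.1
    intro w
    have hspan : Submodule.span ℚ_[2] {v} = ⊤ :=
      Submodule.eq_top_of_finrank_eq (by rw [finrank_span_singleton hv, hrank])
    have hw : w ∈ Submodule.span ℚ_[2] ({v} : Set V) := hspan ▸ Submodule.mem_top
    obtain ⟨c, rfl⟩ := Submodule.mem_span_singleton.mp hw
    rw [_root_.map_smul, halt v, smul_zero]
  -- now n ≥ 2
  have hcomm := sq_one_subgroup_comm S hS2
  by_cases hall : ∀ s ∈ S, (∀ x : V, s x = x) ∨ (∀ x : V, s x = -x)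
  · -- all elements are ±1
    let f : ↥S → Bool := fun t => decide (∀ x : V, (t : V ≃ₗ[ℚ_[2]] V) x = x)
    have hf : Function.Injective f := by
      intro t t' h
      apply Subtype.ext; apply LinearEquiv.ext; intro x
      by_cases h1 : ∀ y : V, (t : V ≃ₗ[ℚ_[2]] V) y = y
        <;> by_cases h2 : ∀ y : V, (t' : V ≃ₗ[ℚ_[2]] V) y = y
      · rw [h1 x, h2 x]
      · exfalso; simp only [f, h1, h2] at h; simp at h
      · exfalso; simp only [f, h1, h2] at h; simp at h
      · have g1 := (hall _ t.2).resolve_left h1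
        have g2 := (hall _ t'.2).resolve_left h2
        rw [g1 x, g2 x]
    have hfin : Finite ↥S := Finite.of_injective f hf
    refine ⟨hfin, ?_⟩
    have hcard : Nat.card ↥S ≤ Nat.card Bool := Nat.card_le_card_of_injective f hf
    have hb : Nat.card Bool = 2 := by simp [Nat.card_eq_fintype_card]
    have h2n : (2 : ℕ) ^ 1 ≤ 2 ^ (n / 2) := Nat.pow_le_pow_right (by norm_num) (by omega)
    omega
  · push_neg at hall
    obtain ⟨s₀, hs₀S, hne⟩ := hall
    obtain ⟨⟨x₁, hx₁⟩, x₂, hx₂⟩ := hne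
    have hs₀inv : ∀ x : V, s₀ (s₀ x) = x := by
      intro x
      have h := hS2 s₀ hs₀S
      calc s₀ (s₀ x) = (s₀ * s₀) x := rfl
        _ = (1 : V ≃ₗ[ℚ_[2]] V) x := by rw [h]
        _ = x := rfl
    set p := LinearMap.ker ((s₀ : V →ₗ[ℚ_[2]] V) - LinearMap.id) with hp
    set q := LinearMap.ker ((s₀ : V →ₗ[ℚ_[2]] V) + LinearMap.id) with hq
    have hpmem : ∀ x : V, x ∈ p ↔ s₀ x = x := by
      intro x
      simp [hp, LinearMap.mem_ker, LinearMap.sub_apply, sub_eq_zero]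
    have hqmem : ∀ x : V, x ∈ q ↔ s₀ x = -x := by
      intro x
      simp [hq, LinearMap.mem_ker, LinearMap.add_apply, add_eq_zero_iff_eq_neg]
    have hup : ∀ x : V, x + s₀ x ∈ p := fun x =>
      (hpmem _).mpr (by rw [map_add, hs₀inv]; abel)
    have huq : ∀ x : V, x - s₀ x ∈ q := fun x =>
      (hqmem _).mpr (by rw [map_sub, hs₀inv]; abel)
    have hsup : p ⊔ q = ⊤ := by
      rw [Submodule.eq_top_iff']
      intro x
      have hx : ((2:ℚ_[2])⁻¹) • ((x + s₀ x) + (x - s₀ x)) = x := by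
        have h2 : (x + s₀ x) + (x - s₀ x) = (2:ℚ_[2]) • x := by rw [two_smul]; abel
        rw [h2, smul_smul, inv_mul_cancel₀ two_ne, one_smul]
      rw [← hx]
      exact Submodule.smul_mem _ _ (Submodule.add_mem _
        (Submodule.mem_sup_left (hup x)) (Submodule.mem_sup_right (huq x)))
    have hinf : p ⊓ q = ⊥ := by
      rw [Submodule.eq_bot_iff]
      rintro x ⟨hxp, hxq⟩
      have h1 := (hpmem x).mp hxp
      have h2 := (hqmem x).mp hxq
      have hx : x = -x := h1.symm.trans h2
      have h3 : (2:ℚ_[2]) • x = 0 := by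
        rw [two_smul]; nth_rewrite 2 [hx]; exact add_neg_cancel x
      exact (smul_eq_zero.mp h3).resolve_left two_ne
    have hqne : q ≠ ⊥ := by
      intro h
      apply hx₁
      have hm := huq x₁
      rw [h, Submodule.mem_bot] at hm
      exact (sub_eq_zero.mp hm).symm
    have hpne : p ≠ ⊥ := by
      intro h
      apply hx₂
      have hm := hup x₂
      rw [h, Submodule.mem_bot] at hm
      rw [add_comm] at hm
      exact eq_neg_of_add_eq_zero_left hm
    have hd : finrank ℚ_[2] p + finrank ℚ_[2] q = n := by
      have h := Submodule.finrank_sup_add_finrank_inf_eq p q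
      rw [hsup, hinf, finrank_bot, finrank_top, hrank] at h
      omega
    have hppos : 0 < finrank ℚ_[2] p :=
      Nat.pos_of_ne_zero (fun h => hpne (Submodule.finrank_eq_zero.mp h))
    have hqpos : 0 < finrank ℚ_[2] q :=
      Nat.pos_of_ne_zero (fun h => hqne (Submodule.finrank_eq_zero.mp h))
    have hstab : ∀ t, t ∈ S → (∀ x ∈ p, t x ∈ p) ∧ (∀ x ∈ q, t x ∈ q) := by
      intro t ht
      have hc : ∀ x : V, s₀ (t x) = t (s₀ x) := by
        intro x
        have h := hcomm s₀ hs₀S t ht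
        calc s₀ (t x) = (s₀ * t) x := rfl
          _ = (t * s₀) x := by rw [h]
          _ = t (s₀ x) := rfl
      constructor
      · intro x hx; rw [hpmem] at hx ⊢; rw [hc, hx]
      · intro x hx; rw [hqmem] at hx ⊢; rw [hc, hx, map_neg]
    have hsq : ∀ t : ↥S, ∀ x : V, (t : V ≃ₗ[ℚ_[2]] V) ((t : V ≃ₗ[ℚ_[2]] V) x) = x := by
      intro t x
      have h := hS2 t t.2
      calc (t : V ≃ₗ[ℚ_[2]] V) ((t : V ≃ₗ[ℚ_[2]] V) x)
          = ((t : V ≃ₗ[ℚ_[2]] V) * (t : V ≃ₗ[ℚ_[2]] V)) x := rfl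
        _ = (1 : V ≃ₗ[ℚ_[2]] V) x := by rw [h]
        _ = x := rfl
    have hmapP : ∀ t : ↥S, p.map ((t : V ≃ₗ[ℚ_[2]] V) : V →ₗ[ℚ_[2]] V) = p := by
      intro t
      apply le_antisymm
      · rintro _ ⟨x, hx, rfl⟩
        exact (hstab _ t.2).1 x hx
      · intro x hx
        exact ⟨(t : V ≃ₗ[ℚ_[2]] V) x, (hstab _ t.2).1 x hx, hsq t x⟩
    have hmapQ : ∀ t : ↥S, q.map ((t : V ≃ₗ[ℚ_[2]] V) : V →ₗ[ℚ_[2]] V) = q := by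
      intro t
      apply le_antisymm
      · rintro _ ⟨x, hx, rfl⟩
        exact (hstab _ t.2).2 x hx
      · intro x hx
        exact ⟨(t : V ≃ₗ[ℚ_[2]] V) x, (hstab _ t.2).2 x hx, hsq t x⟩
    set ρp := restrictHom V S p hmapP with hρp
    set ρq := restrictHom V S q hmapQ with hρq
    -- cross-vanishing
    have hcrossP : ∀ x ∈ p, ∀ y ∈ q, B x y = 0 := by
      intro x hx y hy
      have h1 : B x y = B (s₀ x) (s₀ y) := (hSB s₀ hs₀S x y).symm
      rw [(hpmem x).mp hx, (hqmem y).mp hy, map_neg] at h1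
      have h2 : (2:ℚ_[2]) * B x y = 0 := by
        rw [two_mul]; nth_rewrite 2 [h1]; exact add_neg_cancel _
      exact (mul_eq_zero.mp h2).resolve_left two_ne
    have hcrossQ : ∀ x ∈ q, ∀ y ∈ p, B x y = 0 := by
      intro x hx y hy
      have h1 : B x y = B (s₀ x) (s₀ y) := (hSB s₀ hs₀S x y).symm
      rw [(hqmem x).mp hx, (hpmem y).mp hy, map_neg, LinearMap.neg_apply] at h1
      have h2 : (2:ℚ_[2]) * B x y = 0 := by
        rw [two_mul]; nth_rewrite 2 [h1]; exact add_neg_cancel _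
      exact (mul_eq_zero.mp h2).resolve_left two_ne
    have ndP : (B.restrict p).Nondegenerate := by
      refine LinearMap.BilinForm.Nondegenerate.ofSeparatingLeft ?_
      intro x hx
      have h0 : (x : V) = 0 := by
        apply hnd.1
        intro w
        have hw : w ∈ p ⊔ q := hsup ▸ Submodule.mem_top
        obtain ⟨a, ha, b, hb, rfl⟩ := Submodule.mem_sup.mp hw
        rw [map_add]
        have h1 : B (x : V) a = 0 := hx ⟨a, ha⟩
        have h2 : B (x : V) b = 0 := hcrossP x x.2 b hb
        rw [h1, h2, add_zero]
      exact Subtype.ext h0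
    have ndQ : (B.restrict q).Nondegenerate := by
      refine LinearMap.BilinForm.Nondegenerate.ofSeparatingLeft ?_
      intro x hx
      have h0 : (x : V) = 0 := by
        apply hnd.1
        intro w
        have hw : w ∈ p ⊔ q := hsup ▸ Submodule.mem_top
        obtain ⟨a, ha, b, hb, rfl⟩ := Submodule.mem_sup.mp hw
        rw [map_add]
        have h1 : B (x : V) b = 0 := hx ⟨b, hb⟩
        have h2 : B (x : V) a = 0 := hcrossQ x x.2 a ha
        rw [h1, h2, add_zero]
      exact Subtype.ext h0
    have altP : (B.restrict p).IsAlt := fun x => halt x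
    have altQ : (B.restrict q).IsAlt := fun x => halt x
    have hyp1P : ∀ u ∈ ρp.range, u * u = 1 := by
      rintro u ⟨t, rfl⟩
      rw [← _root_.map_mul]
      have ht : t * t = 1 := Subtype.ext (hS2 t t.2)
      rw [ht, _root_.map_one]
    have hyp1Q : ∀ u ∈ ρq.range, u * u = 1 := by
      rintro u ⟨t, rfl⟩
      rw [← _root_.map_mul]
      have ht : t * t = 1 := Subtype.ext (hS2 t t.2)
      rw [ht, _root_.map_one]
    have hyp2P : ∀ u ∈ ρp.range, ∀ x y, (B.restrict p) (u x) (u y) = (B.restrict p) x y := by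
      rintro u ⟨t, rfl⟩ x y
      have h1 : ((ρp t x : ↥p) : V) = (t : V ≃ₗ[ℚ_[2]] V) x := restrictHom_apply V S p hmapP t x
      have h2 : ((ρp t y : ↥p) : V) = (t : V ≃ₗ[ℚ_[2]] V) y := restrictHom_apply V S p hmapP t y
      show B ((ρp t x : ↥p) : V) ((ρp t y : ↥p) : V) = B (x : V) (y : V)
      rw [h1, h2]
      exact hSB _ t.2 _ _
    have hyp2Q : ∀ u ∈ ρq.range, ∀ x y, (B.restrict q) (u x) (u y) = (B.restrict q) x y := by
      rintro u ⟨t, rfl⟩ x y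
      have h1 : ((ρq t x : ↥q) : V) = (t : V ≃ₗ[ℚ_[2]] V) x := restrictHom_apply V S q hmapQ t x
      have h2 : ((ρq t y : ↥q) : V) = (t : V ≃ₗ[ℚ_[2]] V) y := restrictHom_apply V S q hmapQ t y
      show B ((ρq t x : ↥q) : V) ((ρq t y : ↥q) : V) = B (x : V) (y : V)
      rw [h1, h2]
      exact hSB _ t.2 _ _
    obtain ⟨finP, cardP⟩ := IH (finrank ℚ_[2] p) (by omega) ↥p rfl (B.restrict p)
      altP ndP ρp.range hyp1P hyp2P
    obtain ⟨finQ, cardQ⟩ := IH (finrank ℚ_[2] q) (by omega) ↥q rfl (B.restrict q)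
      altQ ndQ ρq.range hyp1Q hyp2Q
    let F : ↥S → ↥ρp.range × ↥ρq.range := fun t => (⟨ρp t, ⟨t, rfl⟩⟩, ⟨ρq t, ⟨t, rfl⟩⟩)
    have hFinj : Function.Injective F := by
      intro t t' h
      have h1 : ρp t = ρp t' := congrArg (fun z => (z.1 : ↥p ≃ₗ[ℚ_[2]] ↥p)) h
      have h2 : ρq t = ρq t' := congrArg (fun z => (z.2 : ↥q ≃ₗ[ℚ_[2]] ↥q)) h
      apply Subtype.ext; apply LinearEquiv.ext; intro v
      have hv : v ∈ p ⊔ q := hsup ▸ Submodule.mem_top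
      obtain ⟨a, ha, b, hb, rfl⟩ := Submodule.mem_sup.mp hv
      rw [map_add, map_add]
      have e1 := restrictHom_apply V S p hmapP t ⟨a, ha⟩
      have e1' := restrictHom_apply V S p hmapP t' ⟨a, ha⟩
      have e2 := restrictHom_apply V S q hmapQ t ⟨b, hb⟩
      have e2' := restrictHom_apply V S q hmapQ t' ⟨b, hb⟩
      rw [← e1, ← e1', ← e2, ← e2', h1, h2]
    haveI := finP
    haveI := finQ
    have hfin : Finite ↥S := Finite.of_injective F hFinj
    refine ⟨hfin, ?_⟩
    have hcard : Nat.card ↥S ≤ Nat.card (↥ρp.range × ↥ρq.range) :=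
      Nat.card_le_card_of_injective F hFinj
    rw [Nat.card_prod] at hcard
    have hmul : Nat.card ↥ρp.range * Nat.card ↥ρq.range ≤
        2 ^ (finrank ℚ_[2] p / 2) * 2 ^ (finrank ℚ_[2] q / 2) :=
      Nat.mul_le_mul cardP cardQ
    have hpow : (2:ℕ) ^ (finrank ℚ_[2] p / 2) * 2 ^ (finrank ℚ_[2] q / 2) ≤ 2 ^ (n / 2) := by
      rw [← pow_add]
      exact Nat.pow_le_pow_right (by norm_num) (by omega)
    omega

/-- a subgroup `Z` of `Sp_{2g}(ℚ₂)` all of whose elements have order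
dividing `2` is a finite elementary abelian `2`-group of order at most `2^g`. -/
theorem exponent_two_subgroup_of_symplectic
    (g : ℕ) (hg : 0 < g)
    (Z : Subgroup ↥(Matrix.symplecticGroup (Fin g) ℚ_[2]))
    (hZ : ∀ z : Z, z ^ 2 = 1) :
    Finite Z ∧ (∀ a b : Z, a * b = b * a) ∧ Nat.card Z ≤ 2 ^ g := by
  classical
  set K := ℚ_[2]
  set ι := (Fin g ⊕ Fin g)
  set V := (ι → K)
  let Φ : ↥(Matrix.symplecticGroup (Fin g) K) →* (V ≃ₗ[K] V) :=
    (LinearMap.GeneralLinearGroup.generalLinearEquiv K V).toMonoidHom.comp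
      ((Units.map (Matrix.toLinAlgEquiv'.toAlgHom.toRingHom.toMonoidHom :
          Matrix ι ι K →* (V →ₗ[K] V))).comp
        (MonoidHom.toHomUnits (Matrix.symplecticGroup (Fin g) K).subtype))
  have hΦ : ∀ (z : ↥(Matrix.symplecticGroup (Fin g) K)) (v : V),
      Φ z v = (z : Matrix ι ι K) *ᵥ v := fun z v => rfl
  have hΦinj : Function.Injective Φ := by
    intro z z' h
    apply Subtype.ext
    have hv : ∀ v : V, (z : Matrix ι ι K) *ᵥ v = (z' : Matrix ι ι K) *ᵥ v := fun v => by
      rw [← hΦ, ← hΦ, h]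
    have : Matrix.toLin' (z : Matrix ι ι K) = Matrix.toLin' (z' : Matrix ι ι K) := by
      apply LinearMap.ext
      intro v
      rw [Matrix.toLin'_apply, Matrix.toLin'_apply]
      exact hv v
    exact Matrix.toLin'.injective this
  set J' := Matrix.J (Fin g) K with hJ'
  let B : LinearMap.BilinForm K V :=
    LinearMap.mk₂ K (fun v w => v ⬝ᵥ (J' *ᵥ w))
      (fun a b c => add_dotProduct a b _)
      (fun c a b => smul_dotProduct c a _)
      (fun a b c => by
        show a ⬝ᵥ (J' *ᵥ (b + c)) = a ⬝ᵥ (J' *ᵥ b) + a ⬝ᵥ (J' *ᵥ c)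
        rw [mulVec_add, dotProduct_add])
      (fun c a b => by
        show a ⬝ᵥ (J' *ᵥ (c • b)) = c • (a ⬝ᵥ (J' *ᵥ b))
        rw [mulVec_smul, dotProduct_smul])
  have hBapp : ∀ v w : V, B v w = v ⬝ᵥ (J' *ᵥ w) := fun v w => rfl
  have halt : B.IsAlt := by
    intro v
    rw [hBapp]
    have hv : v = Sum.elim (v ∘ Sum.inl) (v ∘ Sum.inr) := by
      funext i; cases i <;> rfl
    rw [hJ', Matrix.J]
    nth_rewrite 1 [hv]
    nth_rewrite 2 [hv]
    rw [fromBlocks_mulVec]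
    simp only [zero_mulVec, neg_mulVec, one_mulVec, zero_add, add_zero]
    rw [sumElim_dotProduct_sumElim, dotProduct_neg, dotProduct_comm]
    exact neg_add_cancel _
  have hnd : B.Nondegenerate := by
    refine LinearMap.BilinForm.Nondegenerate.ofSeparatingLeft ?_
    intro v hv
    have h1 : v ᵥ* J' = 0 := by
      funext j
      have h := hv (Pi.single j 1)
      rw [hBapp, dotProduct_mulVec, dotProduct_single_one] at h
      exact h
    have h2 : v ᵥ* (J' * J') = 0 := by
      rw [← vecMul_vecMul, h1, zero_vecMul]
    rw [hJ', Matrix.J_squared] at h2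
    have h3 : v ᵥ* (-1 : Matrix ι ι K) = -v := by
      rw [vecMul_neg, vecMul_one]
    rw [h3] at h2
    simpa using congrArg Neg.neg h2
  have hpres : ∀ M ∈ Matrix.symplecticGroup (Fin g) K, ∀ v w : V,
      (M *ᵥ v) ⬝ᵥ (J' *ᵥ (M *ᵥ w)) = v ⬝ᵥ (J' *ᵥ w) := by
    intro M hM v w
    have hM' : Mᵀ * J' * M = J' := (SymplecticGroup.mem_iff').mp hM
    rw [dotProduct_mulVec, vecMul_mulVec, ← dotProduct_mulVec, mulVec_mulVec, hM']
  set S := Z.map Φ with hS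
  have hS2 : ∀ s ∈ S, s * s = 1 := by
    rintro s ⟨z, hzZ, rfl⟩
    have h1 := congrArg Subtype.val (hZ ⟨z, hzZ⟩)
    have h2 : z ^ 2 = 1 := h1
    rw [sq] at h2
    rw [← _root_.map_mul, h2, _root_.map_one]
  have hSB : ∀ s ∈ S, ∀ v w : V, B (s v) (s w) = B v w := by
    rintro s ⟨z, hzZ, rfl⟩ v w
    rw [hΦ z v, hΦ z w, hBapp, hBapp]
    exact hpres _ z.2 v w
  have hfr : finrank K V = g + g := by
    rw [Module.finrank_pi]
    simp [ι]
  obtain ⟨hfin, hcard⟩ := key (g + g) V hfr B halt hnd S hS2 hSB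
  have e : ↥Z ≃* ↥S := Subgroup.equivMapOfInjective Z Φ hΦinj
  haveI := hfin
  refine ⟨Finite.of_equiv _ e.toEquiv.symm, ?_, ?_⟩
  · intro a b
    have h : ∀ x : ↥Z, x * x = 1 := fun x => by rw [← sq]; exact hZ x
    have hinv : ∀ x : ↥Z, x⁻¹ = x := fun x => inv_eq_of_mul_eq_one_right (h x)
    calc a * b = (a * b)⁻¹ := (inv_eq_of_mul_eq_one_right (h _)).symm
      _ = b⁻¹ * a⁻¹ := mul_inv_rev a b
      _ = b * a := by rw [hinv a, hinv b]
  · have hc : Nat.card ↥Z = Nat.card ↥S := Nat.card_congr e.toEquiv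
    have hgg : (g + g) / 2 = g := by omega
    rw [hc]
    rw [hgg] at hcard
    exact hcard
end

section
/- (Minkowski–Serre Lemma over ℤ₂.) Let T be a free module of finite rank over the ring ℤ₂ of 2-adic integers, and let u be a ℤ₂-linear automorphism of T of finite order such that u(x) ≡ x (mod 2T) for all x ∈ T. Then u² = id; in particular, u has order 1 or 2. -/
open PadicInt Finset

section aux
variable {T : Type} [AddCommGroup T] [Module ℤ_[2] T]
  [Module.Free ℤ_[2] T] [Module.Finite ℤ_[2] T]

local notation "E" => Module.End ℤ_[2] T

lemma MS_tf (y : T) (h : (2 : ℤ_[2]) • y = 0) : y = 0 := by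
  rcases smul_eq_zero.mp h with h | h
  · exact absurd h (by norm_num)
  · exact h

lemma MS_tfE (f : E) (h : (2 : Module.End ℤ_[2] T) * f = 0) : f = 0 := by
  ext x
  have : (2 : ℤ_[2]) • f x = 0 := by
    have := LinearMap.congr_fun h x
    simpa [two_smul, two_mul, LinearMap.add_apply] using this
  simpa using MS_tf _ this

lemma MS_isUnit_toZMod {d : ℤ_[2]} (h : PadicInt.toZMod d ≠ 0) : IsUnit d := by
  by_contra hd
  apply h
  have : d ∈ IsLocalRing.maximalIdeal ℤ_[2] := hd
  rw [← PadicInt.ker_toZMod] at this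
  exact this

lemma MS_unit_aux (c : ℤ_[2]) (hc : PadicInt.toZMod c ≠ 0) (t : E) :
    IsUnit (c • (1 : Module.End ℤ_[2] T) + (2 : Module.End ℤ_[2] T) * t) := by
  classical
  let b := Module.Free.chooseBasis ℤ_[2] T
  let e := LinearMap.toMatrixAlgEquiv b
  have key : IsUnit (e (c • 1 + 2 * t)) := by
    rw [Matrix.isUnit_iff_isUnit_det]
    apply MS_isUnit_toZMod
    rw [RingHom.map_det]
    have h3 : (2 : Module.End ℤ_[2] T) * t = (2 : ℤ_[2]) • t := by
      ext x; simp [two_smul, two_mul, LinearMap.add_apply]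
    rw [h3]
    have : e (c • 1 + (2 : ℤ_[2]) • t) = c • 1 + (2 : ℤ_[2]) • e t := by
      simp [map_add, map_smul, map_one]
    rw [this]
    have h2 : ((PadicInt.toZMod).mapMatrix (c • 1 + (2 : ℤ_[2]) • (e t)) :
        Matrix _ _ (ZMod 2)) = PadicInt.toZMod c • 1 := by
      ext i j
      have h20 : (PadicInt.toZMod (2 : ℤ_[2]) : ZMod 2) = 0 := by rw [map_ofNat]; decide
      simp [Matrix.one_apply, Matrix.smul_apply, Matrix.add_apply, map_add, map_mul,
        Matrix.map_apply, apply_ite, h20]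
      split_ifs <;> tauto
    rw [h2]
    simp [Matrix.det_smul, hc]
  have := key.map (e.symm : Matrix _ _ ℤ_[2] →+* Module.End ℤ_[2] T)
  simpa using this
end aux

section aux2
variable {T : Type} [AddCommGroup T] [Module ℤ_[2] T]
  [Module.Free ℤ_[2] T] [Module.Finite ℤ_[2] T]

lemma MS_unit_mul_eq_zero {g s : Module.End ℤ_[2] T} (hu : IsUnit g) (h : g * s = 0) :
    s = 0 := by
  obtain ⟨w, rfl⟩ := hu
  have := congrArg (fun x => (↑w⁻¹ : Module.End ℤ_[2] T) * x) h
  simpa [← mul_assoc] using this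

lemma MS_pow_form (s : Module.End ℤ_[2] T) (n : ℕ) :
    ∃ t : Module.End ℤ_[2] T, (1 + 4 * s) ^ n = 1 + 4 * t := by
  induction n with
  | zero => exact ⟨0, by simp⟩
  | succ n ih =>
    obtain ⟨t, ht⟩ := ih
    refine ⟨t + s + 4 * (t * s), ?_⟩
    rw [pow_succ, ht]
    noncomm_ring

lemma MS_sum_form (s : Module.End ℤ_[2] T) (q : ℕ) :
    ∃ t : Module.End ℤ_[2] T,
      ∑ i ∈ range q, (1 + 4 * s) ^ i = (q : Module.End ℤ_[2] T) + 4 * t := by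
  induction q with
  | zero => exact ⟨0, by simp⟩
  | succ q ih =>
    obtain ⟨t, ht⟩ := ih
    obtain ⟨t', ht'⟩ := MS_pow_form s q
    refine ⟨t + t', ?_⟩
    rw [Finset.sum_range_succ, ht, ht']
    push_cast
    noncomm_ring

lemma MS_prime_case (q : ℕ) (hq : q.Prime) (s : Module.End ℤ_[2] T)
    (h : (1 + 4 * s) ^ q = 1) : (1 : Module.End ℤ_[2] T) + 4 * s = 1 := by
  obtain ⟨t, ht⟩ := MS_sum_form s q
  have hg : (∑ i ∈ range q, (1 + 4*s)^i) * ((1 + 4*s) - 1) = 0 := by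
    rw [geom_sum_mul, h, sub_self]
  have hg2 : ((q : Module.End ℤ_[2] T) + 4*t) * (4*s) = 0 := by
    rw [← ht]; simpa using hg
  have h4 : (2 : Module.End ℤ_[2] T) * (2 * (((q : Module.End ℤ_[2] T) + 4*t) * s)) = 0 := by
    rw [← hg2]; noncomm_ring
  have hzero : ((q : Module.End ℤ_[2] T) + 4*t) * s = 0 := MS_tfE _ (MS_tfE _ h4)
  have hs : s = 0 := by
    rcases eq_or_ne q 2 with rfl | hodd
    · have h2 : ((2:ℕ) : Module.End ℤ_[2] T) + 4*t = 2 * (1 + 2*t) := by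
        rw [Nat.cast_ofNat, mul_add, mul_one, ← mul_assoc]; norm_num
      have hz2 : (2 : Module.End ℤ_[2] T) * ((1 + 2*t) * s) = 0 := by
        rw [← mul_assoc, ← h2]; exact hzero
      have hz3 : ((1 : Module.End ℤ_[2] T) + 2*t) * s = 0 := MS_tfE _ hz2
      have hu : IsUnit ((1 : Module.End ℤ_[2] T) + 2*t) := by
        have := MS_unit_aux (1 : ℤ_[2]) (by rw [map_one]; decide) t
        simpa using this
      exact MS_unit_mul_eq_zero hu hz3
    · have hqmod : PadicInt.toZMod ((q:ℕ) : ℤ_[2]) ≠ 0 := by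
        rw [map_natCast]
        intro hc
        rw [ZMod.natCast_eq_zero_iff] at hc
        exact hodd ((Nat.prime_dvd_prime_iff_eq Nat.prime_two hq).mp hc).symm
      have hu : IsUnit ((q : Module.End ℤ_[2] T) + 4*t) := by
        have := MS_unit_aux ((q:ℕ) : ℤ_[2]) hqmod (2*t)
        have hrw : ((q:ℕ) : ℤ_[2]) • (1 : Module.End ℤ_[2] T) + 2 * (2*t)
            = (q : Module.End ℤ_[2] T) + 4*t := by
          rw [Nat.cast_smul_eq_nsmul, nsmul_eq_mul, mul_one]
          noncomm_ring
        rwa [hrw] at this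
      exact MS_unit_mul_eq_zero hu hzero
  rw [hs]; simp

lemma MS_key : ∀ n : ℕ, 0 < n → ∀ s : Module.End ℤ_[2] T,
    (1 + 4 * s) ^ n = 1 → (1 : Module.End ℤ_[2] T) + 4 * s = 1 := by
  intro n
  induction n using Nat.strong_induction_on with
  | _ n ih =>
    intro hn s hs
    rcases eq_or_ne n 1 with rfl | h1
    · simpa using hs
    · obtain ⟨q, hq, m, rfl⟩ := Nat.exists_prime_and_dvd h1
      have hm : 0 < m := Nat.pos_of_ne_zero (by rintro rfl; simp at hn)
      obtain ⟨t, ht⟩ := MS_pow_form s m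
      have hbq : (1 + 4*t) ^ q = (1 : Module.End ℤ_[2] T) := by
        rw [← ht, ← pow_mul, mul_comm]; exact hs
      have h2 := MS_prime_case q hq t hbq
      have hbm : (1 + 4*s) ^ m = (1 : Module.End ℤ_[2] T) := by rw [ht, h2]
      have hlt : m < q * m := (lt_mul_iff_one_lt_left hm).mpr hq.one_lt
      exact ih m hlt hm s hbm

end aux2

/-- Minkowski–Serre over `ℤ₂`: a finite-order `ℤ₂`-linear automorphism
`u` of a free `ℤ₂`-module `T` of finite rank with `u(x) ≡ x (mod 2T)` for all `x`
satisfies `u² = id`. -/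
theorem minkowski_serre_two_adic
    (T : Type) [AddCommGroup T] [Module ℤ_[2] T]
    [Module.Free ℤ_[2] T] [Module.Finite ℤ_[2] T]
    (u : T ≃ₗ[ℤ_[2]] T) (hfin : IsOfFinOrder u)
    (hcong : ∀ x : T, ∃ y : T, u x - x = (2 : ℤ_[2]) • y) :
    u * u = 1 := by
  classical
  set vf : T → T := fun x => Classical.choose (hcong x) with hvf
  have hv2 : ∀ x : T, u x - x = (2 : ℤ_[2]) • vf x := fun x => Classical.choose_spec (hcong x)
  have cancel : ∀ a b : T, (2 : ℤ_[2]) • a = (2 : ℤ_[2]) • b → a = b := by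
    intro a b h
    have := MS_tf (a - b) (by rw [smul_sub, h, sub_self])
    exact sub_eq_zero.mp this
  have hadd : ∀ x y, vf (x + y) = vf x + vf y := by
    intro x y
    apply cancel
    rw [smul_add, ← hv2, ← hv2, ← hv2, map_add]
    abel
  have hsmul : ∀ (c : ℤ_[2]) (x), vf (c • x) = c • vf x := by
    intro c x
    apply cancel
    rw [← hv2, smul_comm, ← hv2, map_smul, smul_sub]
  let v : Module.End ℤ_[2] T := { toFun := vf, map_add' := hadd, map_smul' := hsmul }
  set a : Module.End ℤ_[2] T := (u : T →ₗ[ℤ_[2]] T) with haa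
  have ha : a = 1 + 2 * v := by
    ext x
    have hx := hv2 x
    have h2 : (2 : Module.End ℤ_[2] T) * v = v + v := two_mul v
    rw [LinearMap.add_apply, Module.End.one_apply, h2, LinearMap.add_apply]
    have hvv : v x + v x = (2 : ℤ_[2]) • vf x := by rw [← two_smul ℤ_[2]]; rfl
    rw [hvv, ← hx]
    simp only [haa, LinearEquiv.coe_coe]
    abel
  have hsq : a * a = 1 + 4 * (v + v * v) := by
    rw [ha]; noncomm_ring
  obtain ⟨n, hn, hun⟩ := isOfFinOrder_iff_pow_eq_one.mp hfin
  have hcoe : ∀ k : ℕ, ((u ^ k : T ≃ₗ[ℤ_[2]] T) : T →ₗ[ℤ_[2]] T) = a ^ k := by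
    intro k
    induction k with
    | zero => rfl
    | succ k ih =>
      rw [pow_succ, pow_succ, ← ih]
      rfl
  have han : a ^ n = 1 := by
    rw [← hcoe, hun]; rfl
  have hbn : (1 + 4 * (v + v * v)) ^ n = (1 : Module.End ℤ_[2] T) := by
    rw [← hsq]
    calc (a * a) ^ n = (a ^ 2) ^ n := by rw [sq]
    _ = a ^ (2 * n) := by rw [← pow_mul]
    _ = a ^ n * a ^ n := by rw [two_mul, pow_add]
    _ = 1 := by rw [han, mul_one]
  have hone := MS_key n hn (v + v * v) hbn
  have haa1 : a * a = 1 := by rw [hsq, hone]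
  ext x
  have := LinearMap.congr_fun haa1 x
  simpa [haa] using this
end
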